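/- In the Markovian user model, let (x_1, …, x_k) be an optimal assignment (one maximizing efficiency over all injective sequences of length k). If bidder j does not appear in the assignment and there is an assigned bidder x_t with a_j ≥ a_{x_t} and e_j ≥ e_{x_t}, then the assignment obtained by substituting j for x_t has efficiency at least that of (x_1, …, x_k); in particular it is also optimal. -/

import Mathlib

/-- Efficiency of an assignment `x` of bidders to `k` positions in the
Markovian user model: `Σ_j e (x j) · Π_{l < j} q (x l)`. -/
noncomputable def eff (n : ℕ) (e q : Fin n → ℝ) (k : ℕ) (x : Fin k → Fin n) : ℝ :=
  ∑ j : Fin k, e (x j) * ∏ l ∈ Finset.univ.filter (fun l => l < j), q (x l)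

noncomputable def lval (n : ℕ) (e q : Fin n → ℝ) : List (Fin n) → ℝ
  | [] => 0
  | i :: L => e i + q i * lval n e q L

lemma lval_nil (n : ℕ) (e q : Fin n → ℝ) : lval n e q [] = 0 := rfl

lemma lval_cons (n : ℕ) (e q : Fin n → ℝ) (i : Fin n) (L : List (Fin n)) :
    lval n e q (i :: L) = e i + q i * lval n e q L := rfl

noncomputable def lw (n : ℕ) (q : Fin n → ℝ) (L : List (Fin n)) : ℝ := (L.map q).prod

lemma lw_nil (n : ℕ) (q : Fin n → ℝ) : lw n q [] = 1 := rfl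

lemma lw_cons (n : ℕ) (q : Fin n → ℝ) (i : Fin n) (L : List (Fin n)) :
    lw n q (i :: L) = q i * lw n q L := by simp [lw]

lemma lw_nonneg (n : ℕ) (q : Fin n → ℝ) (hq0 : ∀ i, 0 ≤ q i) (L : List (Fin n)) :
    0 ≤ lw n q L := by
  induction L with
  | nil => norm_num [lw_nil]
  | cons i L ih => rw [lw_cons]; exact mul_nonneg (hq0 i) ih

lemma lw_le_one (n : ℕ) (q : Fin n → ℝ) (hq0 : ∀ i, 0 ≤ q i) (hq1 : ∀ i, q i < 1)
    (L : List (Fin n)) : lw n q L ≤ 1 := by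
  induction L with
  | nil => norm_num [lw_nil]
  | cons i L ih =>
      rw [lw_cons]
      calc q i * lw n q L ≤ 1 * 1 :=
        mul_le_mul (le_of_lt (hq1 i)) ih (lw_nonneg n q hq0 L) zero_le_one
      _ = 1 := one_mul 1

lemma lval_nonneg (n : ℕ) (e q : Fin n → ℝ) (he : ∀ i, 0 ≤ e i) (hq0 : ∀ i, 0 ≤ q i)
    (L : List (Fin n)) : 0 ≤ lval n e q L := by
  induction L with
  | nil => exact le_refl _
  | cons i L ih =>
      show 0 ≤ e i + q i * lval n e q L
      have := mul_nonneg (hq0 i) ih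
      linarith [he i]

lemma lval_append (n : ℕ) (e q : Fin n → ℝ) (A B : List (Fin n)) :
    lval n e q (A ++ B) = lval n e q A + lw n q A * lval n e q B := by
  induction A with
  | nil => simp [lval, lw_nil]
  | cons i A ih =>
      show lval n e q (i :: (A ++ B)) = _
      simp only [lval, ih, lw_cons]
      ring

lemma eff_eq_lval (n : ℕ) (e q : Fin n → ℝ) (k : ℕ) (x : Fin k → Fin n) :
    eff n e q k x = lval n e q (List.ofFn x) := by
  induction k with
  | zero => simp [eff, lval]
  | succ k ih =>
      rw [List.ofFn_succ]
      show eff n e q (k+1) x = e (x 0) + q (x 0) * lval n e q (List.ofFn fun i => x i.succ)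
      rw [← ih (fun i => x i.succ)]
      unfold eff
      rw [Fin.sum_univ_succ]
      have h0 : (Finset.univ.filter (fun l : Fin (k+1) => l < 0)) = ∅ := by
        ext l; simp [Fin.not_lt_zero]
      rw [h0]
      simp only [Finset.prod_empty, mul_one]
      congr 1
      rw [Finset.mul_sum]
      apply Finset.sum_congr rfl
      intro j _
      have hp : ∏ l ∈ Finset.univ.filter (fun l : Fin (k+1) => l < j.succ), q (x l)
          = q (x 0) * ∏ l ∈ Finset.univ.filter (fun l : Fin k => l < j), q (x l.succ) := by
        rw [Finset.prod_filter, Finset.prod_filter, Fin.prod_univ_succ]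
        have h1 : ((0 : Fin (k+1)) < j.succ) := j.succ_pos
        rw [if_pos h1]
        congr 1
        apply Finset.prod_congr rfl
        intro l _
        simp [Fin.succ_lt_succ_iff]
      rw [hp]; ring

lemma ofFn_get_cast {α : Type*} (Z : List α) (k : ℕ) (h : Z.length = k) :
    List.ofFn (fun i : Fin k => Z.get (Fin.cast h.symm i)) = Z := by
  subst h; exact List.ofFn_get Z

lemma ofFn_update {α : Type*} {k : ℕ} (x : Fin k → α) (t : Fin k) (a : α) :
    List.ofFn (Function.update x t a) = (List.ofFn x).set t a := by
  classical
  apply List.ext_getElem (by simp)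
  intro i h1 h2
  have hik : i < k := by simpa using h1
  rw [List.getElem_ofFn, List.getElem_set, Function.update_apply]
  rcases eq_or_ne (t : ℕ) i with hti | hti
  · rw [if_pos hti, if_pos (Fin.ext hti.symm)]
  · rw [if_neg hti, if_neg (fun hcon => hti ((Fin.ext_iff.mp hcon).symm)),
      List.getElem_ofFn]

lemma ofFn_split {α : Type*} {k : ℕ} (x : Fin k → α) (t : Fin k) :
    List.ofFn x
      = (List.ofFn x).take (t : ℕ) ++ x t :: (List.ofFn x).drop ((t : ℕ) + 1) := by
  have htl : (t : ℕ) < (List.ofFn x).length := by simp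
  conv_lhs => rw [← List.take_append_drop (t : ℕ) (List.ofFn x)]
  congr 1
  rw [List.drop_eq_getElem_cons htl]
  congr 1
  exact List.getElem_ofFn htl

lemma key_arith (P S WB Et Ej qt qj : ℝ) (hP : 0 ≤ P) (hS : 0 ≤ S) (hWB : 0 ≤ WB)
    (hWB1 : WB ≤ 1) (hEt : 0 ≤ Et) (hqt1 : qt < 1) (hqj1 : qj < 1)
    (hle : Et ≤ Ej) (hdiv : Et / (1 - qt) ≤ Ej / (1 - qj))
    (hoptz : P * (S + WB * (Et + qt * 0)) ≤ P * (Et + qt * S)) :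
    P * (Et + qt * S) ≤ P * (Ej + qj * S) := by
  rcases eq_or_lt_of_le hP with h | h
  · rw [← h]; simp
  · have h1 : S + WB * Et ≤ Et + qt * S := by
      have := (mul_le_mul_iff_right₀ h).mp (by simpa using hoptz)
      nlinarith
    have hS2 : (1 - qt) * S ≤ Et := by nlinarith [mul_nonneg hWB hEt]
    have hcross : Et * (1 - qj) ≤ Ej * (1 - qt) := by
      rw [div_le_div_iff₀ (by linarith) (by linarith)] at hdiv
      linarith
    apply mul_le_mul_of_nonneg_left _ hP
    rcases le_total qj qt with hc | hc
    · nlinarith [mul_le_mul_of_nonneg_left hS2 (sub_nonneg.mpr hc)]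
    · nlinarith [mul_le_mul_of_nonneg_left hS (sub_nonneg.mpr hc)]

/-- Substitution into an optimal assignment: if `x` is an optimal assignment,
bidder `jb` is unassigned, and `jb` has adjusted ecpm and ecpm at least those
of the assigned bidder `x t`, then substituting `jb` for `x t` gives an
assignment that is no worse — in particular, it is also optimal. -/
theorem substitute_higher_ecpm_bidder (n k : ℕ) (hk : k ≤ n)
    (e q : Fin n → ℝ) (he : ∀ i, 0 ≤ e i)
    (hq0 : ∀ i, 0 ≤ q i) (hq1 : ∀ i, q i < 1)
    (x : Fin k → Fin n) (hx : Function.Injective x)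
    (hopt : ∀ z : Fin k → Fin n, Function.Injective z →
      eff n e q k z ≤ eff n e q k x)
    (jb : Fin n) (hjb : jb ∉ Set.range x) (t : Fin k)
    (ha : e (x t) / (1 - q (x t)) ≤ e jb / (1 - q jb))
    (he' : e (x t) ≤ e jb) :
    eff n e q k x ≤ eff n e q k (Function.update x t jb) ∧
    ∀ z : Fin k → Fin n, Function.Injective z →
      eff n e q k z ≤ eff n e q k (Function.update x t jb) := by
  classical
  have htl : (t : ℕ) < (List.ofFn x).length := by simp
  set A : List (Fin n) := (List.ofFn x).take (t : ℕ) with hA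
  set B : List (Fin n) := (List.ofFn x).drop ((t : ℕ) + 1) with hB
  have hsplit : List.ofFn x = A ++ x t :: B := ofFn_split x t
  have hulist : List.ofFn (Function.update x t jb) = A ++ jb :: B := by
    rw [ofFn_update, List.set_eq_take_append_cons_drop, if_pos htl]
  set Z : List (Fin n) := A ++ (B ++ [x t]) with hZ
  have hperm : Z.Perm (List.ofFn x) := by
    rw [hsplit]
    exact List.Perm.append_left A (List.perm_append_singleton (x t) B)
  have hZlen : Z.length = k := by
    rw [hperm.length_eq, List.length_ofFn]
  set zf : Fin k → Fin n := fun i => Z.get (Fin.cast hZlen.symm i) with hzf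
  have hzlist : List.ofFn zf = Z := ofFn_get_cast Z k hZlen
  have hznodup : Z.Nodup := hperm.nodup_iff.mpr (List.nodup_ofFn.mpr hx)
  have hzinj : Function.Injective zf := by
    have h1 := List.nodup_iff_injective_get.mp hznodup
    exact h1.comp (Fin.cast_injective _)
  have hx' : eff n e q k x
      = lval n e q A + lw n q A * (e (x t) + q (x t) * lval n e q B) := by
    rw [eff_eq_lval, hsplit, lval_append, lval_cons]
  have hu' : eff n e q k (Function.update x t jb)
      = lval n e q A + lw n q A * (e jb + q jb * lval n e q B) := by
    rw [eff_eq_lval, hulist, lval_append, lval_cons]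
  have hz' : eff n e q k zf
      = lval n e q A + lw n q A *
        (lval n e q B + lw n q B * (e (x t) + q (x t) * 0)) := by
    rw [eff_eq_lval, hzlist, hZ, lval_append, lval_append, lval_cons, lval_nil]
  have hoptz := hopt zf hzinj
  rw [hz', hx'] at hoptz
  have hmain : eff n e q k x ≤ eff n e q k (Function.update x t jb) := by
    rw [hx', hu']
    have := key_arith (lw n q A) (lval n e q B) (lw n q B) (e (x t)) (e jb)
      (q (x t)) (q jb) (lw_nonneg n q hq0 A) (lval_nonneg n e q he hq0 B)
      (lw_nonneg n q hq0 B) (lw_le_one n q hq0 hq1 B) (he (x t)) (hq1 (x t))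
      (hq1 jb) he' ha (by linarith)
    linarith
  exact ⟨hmain, fun z hz => le_trans (hopt z hz) hmain⟩
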